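/- arXiv:alg-geom/9309007 — 2 statements merged into one kernel-verified Lean document; each statement's English description precedes it below -/
import Mathlib

section
/- The polar of a reflexive integral polyhedron is itself a reflexive integral polyhedron with respect to the dual lattice. -/
open Finset

/-- The standard pairing between `ℝⁿ` and its dual (identified with `ℝⁿ`). -/
def pairR {n : ℕ} (x y : Fin n → ℝ) : ℝ := ∑ i, x i * y i

/-- A point of `M_ℝ = ℝⁿ` is integral if it lies in the lattice `M = ℤⁿ`. -/
def IsIntegralPt {n : ℕ} (x : Fin n → ℝ) : Prop := ∀ i, ∃ z : ℤ, x i = (z : ℝ)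

/-- The polar `P° = {x | ⟨x,y⟩ ≥ -1 for all y ∈ P}`. -/
def polarSet {n : ℕ} (P : Set (Fin n → ℝ)) : Set (Fin n → ℝ) :=
  {x | ∀ y ∈ P, -1 ≤ pairR x y}

/-- An integral (lattice) polytope: the convex hull of finitely many lattice points. -/
def IsLatticePolytope {n : ℕ} (P : Set (Fin n → ℝ)) : Prop :=
  ∃ S : Finset (Fin n → ℝ), (∀ x ∈ S, IsIntegralPt x) ∧
    P = convexHull ℝ (S : Set (Fin n → ℝ))

/-- `{y | ⟨u,y⟩ = c}` is a supporting hyperplane of `P` cutting out a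
codimension-one face. -/
def IsCodimOneSupport {n : ℕ} (P : Set (Fin n → ℝ)) (u : Fin n → ℝ) (c : ℝ) : Prop :=
  u ≠ 0 ∧ (∀ y ∈ P, c ≤ pairR u y) ∧
  Module.finrank ℝ (affineSpan ℝ {y ∈ P | pairR u y = c}).direction = n - 1

/-- A reflexive polytope: an integral polytope with `0` in its interior all of whose
codimension-one supporting hyperplanes have the form `{y | ⟨ℓ,y⟩ = -1}` with `ℓ`
in the dual lattice. -/
def IsReflexive {n : ℕ} (P : Set (Fin n → ℝ)) : Prop :=
  IsLatticePolytope P ∧ (0 : Fin n → ℝ) ∈ interior P ∧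
  ∀ u : Fin n → ℝ, ∀ c : ℝ, IsCodimOneSupport P u c →
    ∃ ℓ : Fin n → ℤ, {y : Fin n → ℝ | pairR u y = c} =
      {y : Fin n → ℝ | pairR (fun i => (ℓ i : ℝ)) y = -1}




namespace PolarAux

variable {n : ℕ}

lemma pair_comm (x y : Fin n → ℝ) : pairR x y = pairR y x := by
  simp [pairR, mul_comm]

/-- pairing as a linear map in the second variable -/
def pairLin (x : Fin n → ℝ) : (Fin n → ℝ) →ₗ[ℝ] ℝ where
  toFun y := pairR x y
  map_add' a b := by simp [pairR, mul_add, Finset.sum_add_distrib]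
  map_smul' c a := by simp [pairR, Finset.mul_sum, mul_left_comm]

@[simp] lemma pairLin_apply (x y : Fin n → ℝ) : pairLin x y = pairR x y := rfl

lemma pair_add_left (x y z : Fin n → ℝ) : pairR (x + y) z = pairR x z + pairR y z := by
  rw [pair_comm, pair_comm x z, pair_comm y z]; exact (pairLin z).map_add x y

lemma pair_sub_left (x y z : Fin n → ℝ) : pairR (x - y) z = pairR x z - pairR y z := by
  rw [pair_comm, pair_comm x z, pair_comm y z]; exact (pairLin z).map_sub x y

lemma pair_smul_left (c : ℝ) (x z : Fin n → ℝ) : pairR (c • x) z = c * pairR x z := by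
  rw [pair_comm, pair_comm x z]; exact (pairLin z).map_smul c x

lemma pair_smul_right (c : ℝ) (x z : Fin n → ℝ) : pairR x (c • z) = c * pairR x z :=
  (pairLin x).map_smul c z

lemma pair_self_nonneg (x : Fin n → ℝ) : 0 ≤ pairR x x :=
  Finset.sum_nonneg fun i _ => mul_self_nonneg _

lemma eq_zero_of_pair_self (x : Fin n → ℝ) (h : pairR x x = 0) : x = 0 := by
  funext i
  have := (Finset.sum_eq_zero_iff_of_nonneg (fun i _ => mul_self_nonneg (x i))).mp h i (Finset.mem_univ i)
  have : x i = 0 := by nlinarith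
  simpa using this

lemma pair_continuous (x : Fin n → ℝ) : Continuous fun y => pairR x y := by
  unfold pairR
  exact continuous_finset_sum _ fun i _ => (continuous_const.mul (continuous_apply i))

/-- represent a continuous functional as pairing -/
lemma exists_pair_eq (f : (Fin n → ℝ) →ₗ[ℝ] ℝ) : ∃ w : Fin n → ℝ, ∀ y, pairR w y = f y := by
  refine ⟨fun i => f (Pi.single i 1), fun y => ?_⟩
  have hy : y = ∑ i, y i • (Pi.single i (1:ℝ) : Fin n → ℝ) := by
    funext j; simp [Pi.single_apply, Finset.sum_apply]
  calc pairR (fun i => f (Pi.single i 1)) y = ∑ i, y i * f (Pi.single i 1) := by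
        simp [pairR, mul_comm]
    _ = f (∑ i, y i • (Pi.single i (1:ℝ) : Fin n → ℝ)) := by simp [map_sum, map_smul]
    _ = f y := by rw [← hy]

/-- zero pairing with everything implies zero -/
lemma eq_zero_of_forall_pair (w : Fin n → ℝ) (h : ∀ z, pairR w z = 0) : w = 0 :=
  eq_zero_of_pair_self w (h w)

end PolarAux


namespace PolarAux
variable {n : ℕ}

lemma mem_polar_convexHull {S : Set (Fin n → ℝ)} {x : Fin n → ℝ} :
    x ∈ polarSet (convexHull ℝ S) ↔ ∀ s ∈ S, -1 ≤ pairR x s := by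
  constructor
  · intro hx s hs; exact hx s (subset_convexHull ℝ S hs)
  · intro hx y hy
    have hconv : Convex ℝ {y : Fin n → ℝ | -1 ≤ pairR x y} := by
      have := convex_halfSpace_ge (𝕜 := ℝ) (f := fun y => pairR x y)
        ⟨(pairLin x).map_add, (pairLin x).map_smul⟩ (-1)
      exact this
    exact convexHull_min (fun s hs => hx s hs) hconv hy

lemma polar_convex (P : Set (Fin n → ℝ)) : Convex ℝ (polarSet P) := by
  intro a ha b hb s t hs ht hst y hy
  have h1 := ha y hy; have h2 := hb y hy
  have key : pairR (s • a + t • b) y = s * pairR a y + t * pairR b y := by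
    rw [pair_add_left, pair_smul_left, pair_smul_left]
  show -1 ≤ pairR (s • a + t • b) y
  rw [key]; nlinarith

lemma polar_closed (P : Set (Fin n → ℝ)) : IsClosed (polarSet P) := by
  have : polarSet P = ⋂ y ∈ P, {x : Fin n → ℝ | -1 ≤ pairR x y} := by
    ext x; simp [polarSet]
  rw [this]
  refine isClosed_biInter fun y _ => isClosed_le continuous_const ?_
  have : Continuous fun x : Fin n → ℝ => pairR y x := pair_continuous y
  simpa [pair_comm] using this

lemma subset_bipolar (P : Set (Fin n → ℝ)) : P ⊆ polarSet (polarSet P) := by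
  intro y hy x hx
  rw [pair_comm]; exact hx y hy

lemma bipolar_subset (P : Set (Fin n → ℝ)) (hc : IsClosed P) (hconv : Convex ℝ P)
    (h0 : (0 : Fin n → ℝ) ∈ P) : polarSet (polarSet P) ⊆ P := by
  intro x hx
  by_contra hxP
  obtain ⟨f, α, hfx, hfP⟩ := geometric_hahn_banach_point_closed hconv hc hxP
  obtain ⟨w, hw⟩ := exists_pair_eq (f : (Fin n → ℝ) →ₗ[ℝ] ℝ)
  have hα : α < 0 := by have := hfP 0 h0; simpa using this
  have hna : 0 < -α := by linarith
  have hinv : (-α)⁻¹ * (-α) = 1 := inv_mul_cancel₀ hna.ne'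
  set v := (-α)⁻¹ • w with hv
  have hvy : ∀ y, pairR v y = (-α)⁻¹ * f y := by
    intro y; rw [hv, pair_smul_left, hw]; rfl
  have hvP : v ∈ polarSet P := by
    intro y hy
    have : α < f y := hfP y hy
    have h2 : (-α)⁻¹ * α < (-α)⁻¹ * f y := by
      exact mul_lt_mul_of_pos_left this (by positivity)
    have h3 : (-α)⁻¹ * α = -1 := by rw [inv_neg, neg_mul, inv_mul_cancel₀ hα.ne]
    rw [hvy]; linarith
  have hcontr := hx v hvP
  rw [pair_comm, hvy] at hcontr
  have h2 : (-α)⁻¹ * f x < (-α)⁻¹ * α := mul_lt_mul_of_pos_left hfx (by positivity)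
  have h3 : (-α)⁻¹ * α = -1 := by rw [inv_neg, neg_mul, inv_mul_cancel₀ hα.ne]
  linarith

end PolarAux


namespace PolarAux
variable {n : ℕ}

lemma pair_single (x : Fin n → ℝ) (i : Fin n) (t : ℝ) :
    pairR x (Pi.single i t) = x i * t := by
  unfold pairR
  rw [Finset.sum_eq_single i]
  · simp
  · intro j _ hj; simp [Pi.single_apply, hj]
  · simp

lemma polar_compact (P : Set (Fin n → ℝ)) (h0 : (0 : Fin n → ℝ) ∈ interior P) :
    IsCompact (polarSet P) := by
  obtain ⟨ε, hε, hball⟩ := Metric.isOpen_iff.mp isOpen_interior 0 h0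
  have hballP : Metric.ball (0 : Fin n → ℝ) ε ⊆ P := hball.trans interior_subset
  have hsub : polarSet P ⊆ Set.pi Set.univ (fun _ : Fin n => Set.Icc (-(2/ε)) (2/ε)) := by
    intro x hx i _
    have key : ∀ t : ℝ, |t| < ε → -1 ≤ x i * t := by
      intro t ht
      have : (Pi.single i t : Fin n → ℝ) ∈ Metric.ball (0 : Fin n → ℝ) ε := by
        rw [mem_ball_zero_iff]
        calc ‖(Pi.single i t : Fin n → ℝ)‖ = ‖t‖ := by
              simp [Pi.norm_single]
          _ < ε := by rwa [Real.norm_eq_abs]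
      have := hx _ (hballP this)
      rwa [pair_single] at this
    have hone : (2/ε) * (ε/2) = 1 := by field_simp
    constructor
    · by_contra h
      push_neg at h
      have h1 := key (ε/2) (by rw [abs_of_pos (by linarith)]; linarith)
      have h2 : x i * (ε/2) < -(2/ε) * (ε/2) :=
        mul_lt_mul_of_pos_right h (by linarith)
      rw [show -(2/ε) * (ε/2) = -((2/ε) * (ε/2)) by ring, hone] at h2
      linarith
    · by_contra h
      push_neg at h
      have h1 := key (-(ε/2)) (by rw [abs_of_neg (by linarith)]; linarith)
      have h2 : (2/ε) * (ε/2) < x i * (ε/2) :=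
        mul_lt_mul_of_pos_right h (by linarith)
      rw [hone] at h2
      nlinarith
  exact (isCompact_univ_pi fun _ => isCompact_Icc).of_isClosed_subset (polar_closed P) hsub

lemma zero_mem_interior_polar (S : Finset (Fin n → ℝ)) :
    (0 : Fin n → ℝ) ∈ interior (polarSet (convexHull ℝ (S : Set (Fin n → ℝ)))) := by
  set R : ℝ := 1 + ∑ s ∈ S, ‖s‖ with hR
  have hR1 : 1 ≤ R := by
    have : 0 ≤ ∑ s ∈ S, ‖s‖ := Finset.sum_nonneg fun s _ => norm_nonneg s
    linarith
  have hRpos : 0 < R := by linarith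
  set ε : ℝ := 1 / (n * R + 1) with hε
  have hεpos : 0 < ε := by positivity
  have hsub : Metric.ball (0 : Fin n → ℝ) ε ⊆ polarSet (convexHull ℝ (S : Set (Fin n → ℝ))) := by
    intro x hx
    rw [mem_ball_zero_iff] at hx
    refine mem_polar_convexHull.mpr fun s hs => ?_
    have hsR : ∀ i, |s i| ≤ R := by
      intro i
      calc |s i| ≤ ‖s‖ := by simpa [Real.norm_eq_abs] using norm_le_pi_norm s i
        _ ≤ ∑ t ∈ S, ‖t‖ := Finset.single_le_sum (fun t _ => norm_nonneg t) hs
        _ ≤ R := by linarith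
    have habs : |pairR x s| ≤ n * (‖x‖ * R) := by
      calc |pairR x s| ≤ ∑ i, |x i * s i| := Finset.abs_sum_le_sum_abs _ _
        _ ≤ ∑ _i : Fin n, ‖x‖ * R := by
            refine Finset.sum_le_sum fun i _ => ?_
            rw [abs_mul]
            exact mul_le_mul (by simpa [Real.norm_eq_abs] using norm_le_pi_norm x i)
              (hsR i) (abs_nonneg _) (norm_nonneg x)
        _ = n * (‖x‖ * R) := by simp [Finset.sum_const, Finset.card_univ, nsmul_eq_mul]
    have hxnn : 0 ≤ ‖x‖ := norm_nonneg x
    have hlt : (n : ℝ) * (‖x‖ * R) < 1 := by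
      have h1 : (n : ℝ) * (‖x‖ * R) ≤ (n : ℝ) * (ε * R) := by
        have : ‖x‖ * R ≤ ε * R := mul_le_mul_of_nonneg_right hx.le hRpos.le
        exact mul_le_mul_of_nonneg_left this (Nat.cast_nonneg n)
      have h2 : (n : ℝ) * (ε * R) < 1 := by
        have hpos : (0:ℝ) < ↑n * R + 1 := by positivity
        have heq : (n:ℝ) * (ε * R) = (↑n * R)/(↑n * R + 1) := by
          rw [hε]; field_simp
        rw [heq, div_lt_one hpos]; linarith
      linarith
    have := abs_le.mp (le_of_lt (lt_of_le_of_lt habs hlt))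
    linarith [this.1]
  exact mem_interior.mpr ⟨Metric.ball 0 ε, hsub, Metric.isOpen_ball, Metric.mem_ball_self hεpos⟩

end PolarAux


namespace PolarAux
variable {n : ℕ}

lemma pair_zero_left (y : Fin n → ℝ) : pairR 0 y = 0 := by simp [pairR]

lemma pair_self_pos {v : Fin n → ℝ} (hv : v ≠ 0) : 0 < pairR v v := by
  rcases lt_or_eq_of_le (pair_self_nonneg v) with h | h
  · exact h
  · exact absurd (eq_zero_of_pair_self v h.symm) hv

lemma pairLin_ne_zero {v : Fin n → ℝ} (hv : v ≠ 0) : pairLin v ≠ 0 := by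
  intro h
  have : pairR v v = 0 := by
    have := congrArg (fun f : (Fin n → ℝ) →ₗ[ℝ] ℝ => f v) h
    simpa using this
  exact hv (eq_zero_of_pair_self v this)

lemma finrank_ker_pair {v : Fin n → ℝ} (hv : v ≠ 0) :
    Module.finrank ℝ (LinearMap.ker (pairLin v)) = n - 1 := by
  have hrank := LinearMap.finrank_range_add_finrank_ker (pairLin v)
  have hrange : LinearMap.range (pairLin v) = ⊤ := by
    refine Submodule.eq_top_of_finrank_eq ?_
    have h1 : Module.finrank ℝ (LinearMap.range (pairLin v)) ≤ 1 := by
      simpa using Submodule.finrank_le (LinearMap.range (pairLin v))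
    have h2 : LinearMap.range (pairLin v) ≠ ⊥ := by
      intro hb
      have : pairLin v v = 0 := by
        have : pairLin v v ∈ LinearMap.range (pairLin v) := LinearMap.mem_range_self _ v
        rw [hb] at this; simpa using this
      exact (pair_self_pos hv).ne' (by simpa using this)
    have h3 : 0 < Module.finrank ℝ (LinearMap.range (pairLin v)) := by
      rcases Nat.eq_zero_or_pos (Module.finrank ℝ (LinearMap.range (pairLin v))) with h | h
      · exact absurd (Submodule.finrank_eq_zero.mp h) h2
      · exact h
    have : Module.finrank ℝ ℝ = 1 := Module.finrank_self ℝ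
    omega
  rw [hrange, finrank_top, Module.finrank_fin_fun] at hrank
  have : Module.finrank ℝ ℝ = 1 := Module.finrank_self ℝ
  -- hrank : finrank (⊤-ish)... careful
  omega

lemma exists_perp {T : Set (Fin n → ℝ)} (h : Submodule.span ℝ T ≠ ⊤) :
    ∃ w : Fin n → ℝ, w ≠ 0 ∧ ∀ s ∈ T, pairR s w = 0 := by
  obtain ⟨f, hf, hmap⟩ := Submodule.exists_dual_map_eq_bot_of_lt_top
    (lt_of_le_of_ne le_top h) inferInstance
  obtain ⟨w, hw⟩ := exists_pair_eq f
  refine ⟨w, ?_, ?_⟩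
  · intro h0
    obtain ⟨y, hy⟩ := DFunLike.ne_iff.mp hf
    apply hy
    have := hw y
    rw [h0, pair_zero_left] at this
    exact this.symm
  · intro s hs
    have : f s ∈ Submodule.map f (Submodule.span ℝ T) :=
      Submodule.mem_map_of_mem (Submodule.subset_span hs)
    rw [hmap] at this
    have hfs : f s = 0 := by simpa using this
    rw [pair_comm, hw, hfs]

lemma eq_zero_of_span_top {T : Set (Fin n → ℝ)} (hspan : Submodule.span ℝ T = ⊤)
    {w : Fin n → ℝ} (h : ∀ s ∈ T, pairR s w = 0) : w = 0 := by
  have hle : Submodule.span ℝ T ≤ LinearMap.ker (pairLin w) := by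
    rw [Submodule.span_le]
    intro s hs
    simp only [SetLike.mem_coe, LinearMap.mem_ker, pairLin_apply]
    rw [pair_comm]; exact h s hs
  rw [hspan, top_le_iff] at hle
  have : pairLin w w = 0 := by
    have : w ∈ LinearMap.ker (pairLin w) := by rw [hle]; trivial
    simpa using this
  exact eq_zero_of_pair_self w (by simpa using this)

lemma face_dim_eq (hn : 1 ≤ n) {v : Fin n → ℝ} {F : Set (Fin n → ℝ)}
    (hv : ∀ y ∈ F, pairR v y = -1)
    {T : Set (Fin n → ℝ)} (hTF : T ⊆ F) (hspan : Submodule.span ℝ T = ⊤) :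
    Module.finrank ℝ (affineSpan ℝ F).direction = n - 1 := by
  have hvne : v ≠ 0 := by
    rcases Set.eq_empty_or_nonempty T with hT | ⟨t0, ht0⟩
    · exfalso
      rw [hT] at hspan
      simp only [Submodule.span_empty] at hspan
      have hfr : Module.finrank ℝ (⊥ : Submodule ℝ (Fin n → ℝ))
          = Module.finrank ℝ (⊤ : Submodule ℝ (Fin n → ℝ)) := by rw [hspan]
      rw [finrank_bot, finrank_top, Module.finrank_fin_fun] at hfr
      omega
    · intro h0
      have := hv t0 (hTF ht0)
      rw [h0, pair_zero_left] at this
      norm_num at this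
  obtain ⟨t0, ht0⟩ : T.Nonempty := by
    rcases Set.eq_empty_or_nonempty T with hT | h
    · exfalso
      rw [hT] at hspan
      simp only [Submodule.span_empty] at hspan
      have hfr : Module.finrank ℝ (⊥ : Submodule ℝ (Fin n → ℝ))
          = Module.finrank ℝ (⊤ : Submodule ℝ (Fin n → ℝ)) := by rw [hspan]
      rw [finrank_bot, finrank_top, Module.finrank_fin_fun] at hfr
      omega
    · exact h
  set D := (affineSpan ℝ F).direction with hD
  have hDvs : D = vectorSpan ℝ F := direction_affineSpan ℝ F
  -- upper bound : D ≤ ker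
  have hupper : D ≤ LinearMap.ker (pairLin v) := by
    rw [hDvs, vectorSpan_def, Submodule.span_le]
    rintro z ⟨a, ha, b, hb, rfl⟩
    simp only [SetLike.mem_coe, LinearMap.mem_ker]
    have : pairLin v (a - b) = pairLin v a - pairLin v b := map_sub _ _ _
    rw [vsub_eq_sub, this]
    simp only [pairLin_apply, hv a ha, hv b hb, sub_self]
  have hub : Module.finrank ℝ D ≤ n - 1 := by
    have := Submodule.finrank_mono hupper
    rwa [finrank_ker_pair hvne] at this
  -- lower bound
  have hlower : Submodule.span ℝ T ≤ D ⊔ Submodule.span ℝ {t0} := by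
    rw [Submodule.span_le]
    intro t ht
    have h1 : t - t0 ∈ D := by
      rw [hDvs]
      exact vsub_mem_vectorSpan ℝ (hTF ht) (hTF ht0)
    have h2 : t0 ∈ Submodule.span ℝ ({t0} : Set (Fin n → ℝ)) :=
      Submodule.subset_span rfl
    have : t = (t - t0) + t0 := by ring
    rw [SetLike.mem_coe, this]
    exact Submodule.add_mem _ (Submodule.mem_sup_left h1) (Submodule.mem_sup_right h2)
  have hlb : n - 1 ≤ Module.finrank ℝ D := by
    rw [hspan] at hlower
    have h1 : n ≤ Module.finrank ℝ (D ⊔ Submodule.span ℝ {t0} : Submodule ℝ (Fin n → ℝ)) := by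
      have := Submodule.finrank_mono hlower
      rwa [finrank_top, Module.finrank_fin_fun] at this
    have h2 : Module.finrank ℝ (Submodule.span ℝ ({t0} : Set (Fin n → ℝ))) ≤ 1 := by
      by_cases h : t0 = 0
      · rw [h, Submodule.span_zero_singleton]
        simp
      · rw [finrank_span_singleton h]
    have h3 : Module.finrank ℝ (D ⊔ Submodule.span ℝ {t0} : Submodule ℝ (Fin n → ℝ))
        ≤ Module.finrank ℝ D + Module.finrank ℝ (Submodule.span ℝ ({t0} : Set (Fin n → ℝ))) := by
      have := Submodule.finrank_sup_add_finrank_inf_eq D (Submodule.span ℝ {t0})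
      omega
    omega
  omega

lemma eq_of_hyperplane_eq {v ℓ : Fin n → ℝ} (hv : v ≠ 0)
    (h : {y : Fin n → ℝ | pairR v y = -1} = {y : Fin n → ℝ | pairR ℓ y = -1}) : ℓ = v := by
  have hp := pair_self_pos hv
  set y0 : Fin n → ℝ := (-(1 / pairR v v)) • v with hy0
  have hvy0 : pairR v y0 = -1 := by
    rw [hy0, pair_smul_right]
    field_simp
  have hly0 : pairR ℓ y0 = -1 := by
    have : y0 ∈ {y : Fin n → ℝ | pairR v y = -1} := hvy0
    rw [h] at this; exact this
  have hperp : ∀ z, pairR v z = 0 → pairR ℓ z = 0 := by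
    intro z hz
    have : y0 + z ∈ {y : Fin n → ℝ | pairR v y = -1} := by
      show pairR v (y0 + z) = -1
      rw [pair_comm, pair_add_left, pair_comm y0, pair_comm z, hvy0, hz]; ring
    rw [h] at this
    have h2 : pairR ℓ (y0 + z) = -1 := this
    rw [pair_comm, pair_add_left, pair_comm y0, pair_comm z] at h2
    rw [hly0] at h2; linarith
  have hkey : ∀ z, pairR ℓ z = (pairR ℓ v / pairR v v) * pairR v z := by
    intro z
    have hz' : pairR v (z - (pairR v z / pairR v v) • v) = 0 := by
      rw [pair_comm, pair_sub_left, pair_smul_left, pair_comm z v]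
      field_simp; ring
    have := hperp _ hz'
    rw [pair_comm, pair_sub_left, pair_smul_left, pair_comm z ℓ, pair_comm v ℓ] at this
    have h2 : pairR ℓ z = (pairR v z / pairR v v) * pairR ℓ v := by linarith
    rw [h2]; ring
  have hmu : pairR ℓ v / pairR v v = 1 := by
    have := hkey y0
    rw [hly0, hvy0] at this
    linarith
  have : ∀ z, pairR (ℓ - v) z = 0 := by
    intro z
    rw [pair_sub_left, hkey z, hmu]; ring
  have := eq_zero_of_forall_pair _ this
  have : ℓ - v = 0 := this
  exact sub_eq_zero.mp this

end PolarAux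


namespace PolarAux
variable {n : ℕ}

/-- active constraints at an extreme point of the polar span everything -/
lemma active_span (S : Finset (Fin n → ℝ)) (hSne : S.Nonempty)
    {x : Fin n → ℝ} (hx : x ∈ (polarSet (convexHull ℝ (S : Set (Fin n → ℝ)))).extremePoints ℝ) :
    Submodule.span ℝ {s : Fin n → ℝ | s ∈ S ∧ pairR s x = -1} = ⊤ := by
  by_contra hne
  obtain ⟨w, hw0, hwperp⟩ := exists_perp hne
  obtain ⟨hxmem, hxext⟩ := hx
  have hxS : ∀ s ∈ S, -1 ≤ pairR s x := by
    intro s hs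
    rw [pair_comm]
    exact mem_polar_convexHull.mp hxmem s hs
  classical
  set g : (Fin n → ℝ) → ℝ := fun s =>
    if pairR s w = 0 then 1 else (pairR s x + 1) / (2 * |pairR s w|) with hg
  have hgpos : ∀ s ∈ S, 0 < g s := by
    intro s hs
    rw [hg]
    by_cases h : pairR s w = 0
    · simp [h]
    · simp only [h, if_false]
      have h1 : s ∉ {s : Fin n → ℝ | s ∈ S ∧ pairR s x = -1} := fun hmem => h (hwperp s hmem)
      have h2 : pairR s x ≠ -1 := fun hc => h1 ⟨hs, hc⟩
      have h3 : -1 < pairR s x := lt_of_le_of_ne (hxS s hs) (Ne.symm h2)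
      have h4 : 0 < |pairR s w| := abs_pos.mpr h
      apply div_pos (by linarith) (by linarith)
  set δ : ℝ := S.inf' hSne g with hδ
  have hδpos : 0 < δ := by
    rw [hδ, Finset.lt_inf'_iff]
    exact hgpos
  have hpert : ∀ (σ : ℝ), |σ| ≤ δ → x + σ • w ∈ polarSet (convexHull ℝ (S : Set (Fin n → ℝ))) := by
    intro σ hσ
    refine mem_polar_convexHull.mpr fun s hs => ?_
    have hcomm : pairR (x + σ • w) s = pairR s x + σ * pairR s w := by
      rw [pair_add_left, pair_smul_left, pair_comm x s, pair_comm w s]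
    rw [hcomm]
    by_cases h : pairR s w = 0
    · rw [h]; simpa using hxS s hs
    · have hgs : δ ≤ g s := Finset.inf'_le g hs
      have h4 : 0 < |pairR s w| := abs_pos.mpr h
      have h1 : s ∉ {s : Fin n → ℝ | s ∈ S ∧ pairR s x = -1} := fun hmem => h (hwperp s hmem)
      have h3 : -1 < pairR s x := lt_of_le_of_ne (hxS s hs) (fun hc => h1 ⟨hs, hc.symm⟩)
      have hb : |σ * pairR s w| ≤ (pairR s x + 1) / 2 := by
        rw [abs_mul]
        have : |σ| * |pairR s w| ≤ g s * |pairR s w| :=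
          mul_le_mul_of_nonneg_right (le_trans hσ hgs) (abs_nonneg _)
        have hgseq : g s = (pairR s x + 1) / (2 * |pairR s w|) := by
          rw [hg]; simp [h]
        rw [hgseq] at this
        calc |σ| * |pairR s w| ≤ (pairR s x + 1) / (2 * |pairR s w|) * |pairR s w| := this
          _ = (pairR s x + 1) / 2 := by field_simp
      have := abs_le.mp hb
      linarith [this.1]
  have hplus := hpert δ (by rw [abs_of_pos hδpos])
  have hminus := hpert (-δ) (by rw [abs_neg, abs_of_pos hδpos])
  have hseg : x ∈ openSegment ℝ (x + δ • w) (x + (-δ) • w) := by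
    refine ⟨1/2, 1/2, by norm_num, by norm_num, by norm_num, by module⟩
  have := hxext hplus hminus hseg
  have h0 : δ • w = 0 := by
    have h1 := this
    have : x + δ • w - x = 0 := by rw [h1]; ring
    simpa using this
  exact hw0 (by
    have := smul_eq_zero.mp h0
    rcases this with h | h
    · exact absurd h hδpos.ne'
    · exact h)

end PolarAux


namespace PolarAux
variable {n : ℕ}

lemma extreme_finite (S : Finset (Fin n → ℝ)) (hSne : S.Nonempty) :
    ((polarSet (convexHull ℝ (S : Set (Fin n → ℝ)))).extremePoints ℝ).Finite := by
  set E := (polarSet (convexHull ℝ (S : Set (Fin n → ℝ)))).extremePoints ℝ with hE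
  set φ : (Fin n → ℝ) → Set (Fin n → ℝ) := fun x => {s : Fin n → ℝ | s ∈ S ∧ pairR s x = -1}
    with hφ
  have himg : (φ '' E).Finite := by
    refine Set.Finite.subset (S.finite_toSet.finite_subsets) ?_
    rintro _ ⟨x, _, rfl⟩
    intro s hs
    exact hs.1
  refine Set.Finite.of_finite_image himg ?_
  intro x hx x' hx' hφeq
  have hsp := active_span S hSne hx
  have hzero : x - x' = 0 := by
    refine eq_zero_of_span_top hsp ?_
    intro s hs
    have hs' : s ∈ φ x' := by rw [← hφeq]; exact hs
    have h1 : pairR s x = -1 := hs.2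
    have h2 : pairR s x' = -1 := hs'.2
    have : pairLin s (x - x') = pairLin s x - pairLin s x' := map_sub _ _ _
    simpa [h1, h2] using this
  exact sub_eq_zero.mp hzero

lemma span_top_nonempty (hn : 1 ≤ n) {T : Set (Fin n → ℝ)}
    (hspan : Submodule.span ℝ T = ⊤) : T.Nonempty := by
  rcases Set.eq_empty_or_nonempty T with hT | h
  · exfalso
    rw [hT] at hspan
    simp only [Submodule.span_empty] at hspan
    have hfr : Module.finrank ℝ (⊥ : Submodule ℝ (Fin n → ℝ))
        = Module.finrank ℝ (⊤ : Submodule ℝ (Fin n → ℝ)) := by rw [hspan]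
    rw [finrank_bot, finrank_top, Module.finrank_fin_fun] at hfr
    omega
  · exact h

lemma extreme_lattice (hn : 1 ≤ n) (S : Finset (Fin n → ℝ)) (hSne : S.Nonempty)
    (hsupp : ∀ u : Fin n → ℝ, ∀ c : ℝ,
      ((u ≠ 0) ∧ (∀ y ∈ convexHull ℝ (S : Set (Fin n → ℝ)), c ≤ pairR u y) ∧
        Module.finrank ℝ (affineSpan ℝ
          {y ∈ convexHull ℝ (S : Set (Fin n → ℝ)) | pairR u y = c}).direction = n - 1) →
      ∃ ℓ : Fin n → ℤ, {y : Fin n → ℝ | pairR u y = c} =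
        {y : Fin n → ℝ | pairR (fun i => (ℓ i : ℝ)) y = -1})
    {x : Fin n → ℝ} (hx : x ∈ (polarSet (convexHull ℝ (S : Set (Fin n → ℝ)))).extremePoints ℝ) :
    IsIntegralPt x := by
  have hsp := active_span S hSne hx
  have hxmem := hx.1
  obtain ⟨s0, hs0⟩ := span_top_nonempty hn hsp
  have hxne : x ≠ 0 := by
    intro h0
    have := hs0.2
    rw [h0] at this
    rw [pair_comm, pair_zero_left] at this
    norm_num at this
  have hTF : {s : Fin n → ℝ | s ∈ S ∧ pairR s x = -1}
      ⊆ {y ∈ convexHull ℝ (S : Set (Fin n → ℝ)) | pairR x y = -1} := by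
    rintro s ⟨hsS, hsx⟩
    exact ⟨subset_convexHull ℝ _ hsS, by rw [pair_comm]; exact hsx⟩
  have hdim := face_dim_eq hn
    (v := x) (F := {y ∈ convexHull ℝ (S : Set (Fin n → ℝ)) | pairR x y = -1})
    (fun y hy => hy.2) hTF hsp
  obtain ⟨ℓ, hℓ⟩ := hsupp x (-1) ⟨hxne, fun y hy => hxmem y hy, hdim⟩
  have := eq_of_hyperplane_eq hxne hℓ
  intro i
  exact ⟨ℓ i, (congrFun this i).symm⟩

end PolarAux


namespace PolarAux
variable {n : ℕ}

lemma polar_codim_support (hn : 2 ≤ n) (S : Finset (Fin n → ℝ))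
    (hSint : ∀ s ∈ S, IsIntegralPt s)
    (h0 : (0 : Fin n → ℝ) ∈ interior (convexHull ℝ (S : Set (Fin n → ℝ))))
    (u : Fin n → ℝ) (c : ℝ)
    (hu : u ≠ 0)
    (hmin : ∀ y ∈ polarSet (convexHull ℝ (S : Set (Fin n → ℝ))), c ≤ pairR u y)
    (hdim : Module.finrank ℝ (affineSpan ℝ
      {y ∈ polarSet (convexHull ℝ (S : Set (Fin n → ℝ))) | pairR u y = c}).direction = n - 1) :
    ∃ ℓ : Fin n → ℤ, {y : Fin n → ℝ | pairR u y = c} =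
      {y : Fin n → ℝ | pairR (fun i => (ℓ i : ℝ)) y = -1} := by
  classical
  set P : Set (Fin n → ℝ) := convexHull ℝ (S : Set (Fin n → ℝ)) with hPdef
  have hPc : IsClosed P := (S.finite_toSet.isCompact_convexHull ℝ).isClosed
  have hPconv : Convex ℝ P := convex_convexHull ℝ _
  have h0P : (0 : Fin n → ℝ) ∈ P := interior_subset h0
  set F : Set (Fin n → ℝ) := {y ∈ polarSet P | pairR u y = c} with hF
  -- F is nonempty
  obtain ⟨x0, hx0⟩ : F.Nonempty := by
    rcases Set.eq_empty_or_nonempty F with hFe | h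
    · exfalso
      rw [show F = (∅ : Set (Fin n → ℝ)) from hFe] at hdim
      rw [AffineSubspace.span_empty, AffineSubspace.direction_bot] at hdim
      rw [finrank_bot] at hdim
      omega
    · exact h
  -- c < 0
  have hcneg : c < 0 := by
    obtain ⟨ε, hε, hball⟩ := Metric.isOpen_iff.mp isOpen_interior 0 (zero_mem_interior_polar S)
    have hballP : Metric.ball (0 : Fin n → ℝ) ε ⊆ polarSet P :=
      hball.trans interior_subset
    have huu := pair_self_pos hu
    set t : ℝ := ε / (2 * (‖u‖ + 1)) with ht
    have htpos : 0 < t := by positivity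
    have hz : (-t) • u ∈ Metric.ball (0 : Fin n → ℝ) ε := by
      rw [mem_ball_zero_iff, norm_smul]
      have h1 : ‖(-t : ℝ)‖ = t := by rw [Real.norm_eq_abs, abs_neg, abs_of_pos htpos]
      rw [h1]
      have h2 : t * ‖u‖ ≤ t * (‖u‖ + 1) := by nlinarith [norm_nonneg u]
      have h3 : t * (‖u‖ + 1) = ε / 2 := by
        rw [ht]; field_simp
      linarith
    have := hmin _ (hballP hz)
    rw [pair_smul_right] at this
    nlinarith
  have hcpos : 0 < -c := by linarith
  set v : Fin n → ℝ := (-c)⁻¹ • u with hv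
  have hveq : ∀ x, pairR v x = (-c)⁻¹ * pairR u x := fun x => pair_smul_left _ _ _
  have hinv : (-c)⁻¹ * c = -1 := by rw [inv_neg, neg_mul, inv_mul_cancel₀ hcneg.ne]
  have hyp_eq : {y : Fin n → ℝ | pairR u y = c} = {y : Fin n → ℝ | pairR v y = -1} := by
    ext y
    simp only [Set.mem_setOf_eq, hveq]
    constructor
    · intro h; rw [h, hinv]
    · intro h
      have h2 : (-c) * ((-c)⁻¹ * pairR u y) = (-c) * (-1) := by rw [h]
      rw [← mul_assoc, mul_inv_cancel₀ hcpos.ne', one_mul] at h2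
      linarith
  have hvP : v ∈ P := by
    apply bipolar_subset P hPc hPconv h0P
    intro x hx
    rw [hveq]
    have := hmin x hx
    have h2 : (-c)⁻¹ * c ≤ (-c)⁻¹ * pairR u x :=
      mul_le_mul_of_nonneg_left this (by positivity)
    rw [hinv] at h2
    exact h2
  have hvx0 : pairR v x0 = -1 := by
    rw [hveq, hx0.2, hinv]
  have hvne : v ≠ 0 := by
    intro h
    rw [h, pair_zero_left] at hvx0
    norm_num at hvx0
  -- direction of span F equals ker of pairing with v
  have hdirker : (affineSpan ℝ F).direction = LinearMap.ker (pairLin v) := by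
    apply Submodule.eq_of_le_of_finrank_eq
    · rw [direction_affineSpan, vectorSpan_def, Submodule.span_le]
      rintro z ⟨a, ha, b, hb, rfl⟩
      simp only [SetLike.mem_coe, LinearMap.mem_ker]
      have hva : pairR v a = -1 := by rw [hveq, ha.2, hinv]
      have hvb : pairR v b = -1 := by rw [hveq, hb.2, hinv]
      have : pairLin v (a - b) = pairLin v a - pairLin v b := map_sub _ _ _
      rw [vsub_eq_sub, this]
      simp only [pairLin_apply, hva, hvb, sub_self]
    · rw [finrank_ker_pair hvne, hdim]
  -- v is an extreme point of P
  have hext : v ∈ P.extremePoints ℝ := by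
    refine ⟨hvP, ?_⟩
    intro a ha b hb hseg
    obtain ⟨ta, tb, hta, htb, htsum, habv⟩ := hseg
    have hface : ∀ x ∈ F, pairR a x = -1 ∧ pairR b x = -1 := by
      intro x hxF
      have hA : -1 ≤ pairR a x := by rw [pair_comm]; exact hxF.1 a ha
      have hB : -1 ≤ pairR b x := by rw [pair_comm]; exact hxF.1 b hb
      have hvx : pairR v x = -1 := by rw [hveq, hxF.2, hinv]
      have hcombo : ta * pairR a x + tb * pairR b x = -1 := by
        rw [← hvx, ← habv, pair_add_left, pair_smul_left, pair_smul_left]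
      constructor <;> nlinarith
    have hkey : ∀ w : Fin n → ℝ, (∀ x ∈ F, pairR w x = 0) → w = 0 := by
      intro w hw
      have hDw : (affineSpan ℝ F).direction ≤ LinearMap.ker (pairLin w) := by
        rw [direction_affineSpan, vectorSpan_def, Submodule.span_le]
        rintro z ⟨p, hp, q, hq, rfl⟩
        simp only [SetLike.mem_coe, LinearMap.mem_ker]
        have : pairLin w (p - q) = pairLin w p - pairLin w q := map_sub _ _ _
        rw [vsub_eq_sub, this]
        simp only [pairLin_apply, hw p hp, hw q hq, sub_self]
      rw [hdirker] at hDw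
      apply eq_zero_of_forall_pair
      intro z
      have hz : z + (pairR v z) • x0 ∈ LinearMap.ker (pairLin v) := by
        simp only [LinearMap.mem_ker, map_add, map_smul, pairLin_apply, smul_eq_mul]
        rw [hvx0]; ring
      have := hDw hz
      simp only [LinearMap.mem_ker, map_add, map_smul, pairLin_apply, smul_eq_mul] at this
      rw [hw x0 hx0] at this
      simpa using this
    have ha0 : a - v = 0 := by
      refine hkey _ fun x hxF => ?_
      have hvx : pairR v x = -1 := by rw [hveq, hxF.2, hinv]
      rw [pair_sub_left, (hface x hxF).1, hvx]; ring
    have hb0 : b - v = 0 := by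
      refine hkey _ fun x hxF => ?_
      have hvx : pairR v x = -1 := by rw [hveq, hxF.2, hinv]
      rw [pair_sub_left, (hface x hxF).2, hvx]; ring
    exact sub_eq_zero.mp ha0
  have hvS : v ∈ (S : Set (Fin n → ℝ)) := by
    have : v ∈ (convexHull ℝ (S : Set (Fin n → ℝ))).extremePoints ℝ := hext
    exact extremePoints_convexHull_subset this
  obtain hint := hSint v hvS
  choose z hz using hint
  refine ⟨z, ?_⟩
  rw [hyp_eq]
  have : (fun i => ((z i : ℝ))) = v := funext fun i => (hz i).symm
  rw [this]

end PolarAux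


namespace PolarAux

lemma reflexive_one_false (P : Set (Fin 1 → ℝ)) (hP : IsReflexive P) : False := by
  obtain ⟨⟨S, hSint, hPdef⟩, h0, hsupp⟩ := hP
  subst hPdef
  set R : ℝ := 1 + ∑ s ∈ S, ‖s‖ with hR
  have hsum : 0 ≤ ∑ s ∈ S, ‖s‖ := Finset.sum_nonneg fun s _ => norm_nonneg s
  have hR1 : 1 ≤ R := by rw [hR]; linarith
  set u : Fin 1 → ℝ := fun _ => 1 with huu
  have hbound : ∀ y ∈ convexHull ℝ (S : Set (Fin 1 → ℝ)), -R ≤ pairR u y := by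
    intro y hy
    have hconv : Convex ℝ {y : Fin 1 → ℝ | -R ≤ pairR u y} :=
      convex_halfSpace_ge ⟨(pairLin u).map_add, (pairLin u).map_smul⟩ (-R)
    refine convexHull_min (fun s hs => ?_) hconv hy
    have h1 : pairR u s = s 0 := by simp [pairR, huu]
    have h2 : |s 0| ≤ ‖s‖ := by
      simpa [Real.norm_eq_abs] using norm_le_pi_norm s 0
    have h3 : ‖s‖ ≤ ∑ t ∈ S, ‖t‖ := Finset.single_le_sum (fun t _ => norm_nonneg t) hs
    have := abs_le.mp (le_trans h2 h3)
    show -R ≤ pairR u s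
    rw [h1, hR]; linarith [this.1]
  have hu : u ≠ 0 := by
    intro h
    have := congrFun h 0
    norm_num [huu] at this
  set c : ℝ := -(R + 2) with hc
  have hemp : {y ∈ convexHull ℝ (S : Set (Fin 1 → ℝ)) | pairR u y = c} = ∅ := by
    refine Set.eq_empty_iff_forall_notMem.mpr ?_
    rintro y ⟨hy1, hy2⟩
    have := hbound y hy1
    rw [hy2, hc] at this
    linarith
  have hsup : IsCodimOneSupport (convexHull ℝ (S : Set (Fin 1 → ℝ))) u c := by
    refine ⟨hu, fun y hy => by have := hbound y hy; rw [hc]; linarith, ?_⟩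
    rw [hemp, AffineSubspace.span_empty, AffineSubspace.direction_bot, finrank_bot]
  obtain ⟨ℓ, hℓ⟩ := hsupp u c hsup
  have hmem : (fun _ : Fin 1 => c) ∈ {y : Fin 1 → ℝ | pairR u y = c} := by
    simp [pairR, huu]
  rw [hℓ] at hmem
  have hc2 : (ℓ 0 : ℝ) * c = -1 := by
    simpa [pairR, Fin.sum_univ_one] using hmem
  have hcle : c ≤ -3 := by rw [hc]; linarith
  have h1 : (0:ℝ) < (ℓ 0 : ℝ) := by nlinarith
  have h2 : ((ℓ 0 : ℝ)) < 1 := by nlinarith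
  have h1' : (0:ℤ) < ℓ 0 := by exact_mod_cast h1
  have h2' : ℓ 0 < 1 := by exact_mod_cast h2
  omega

end PolarAux

/-- The polar of a reflexive integral polyhedron is itself a reflexive
integral polyhedron with respect to the dual lattice. -/
theorem polar_of_reflexive_is_reflexive {n : ℕ} (P : Set (Fin n → ℝ))
    (hP : IsReflexive P) : IsReflexive (polarSet P) := by
  classical
  by_cases hzero : n = 0
  · subst hzero
    have hpol : polarSet P = Set.univ := Set.eq_univ_of_forall fun x y hy => by
      simp [pairR]
    refine ⟨⟨{0}, ?_, ?_⟩, ?_, ?_⟩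
    · intro x _ i; exact i.elim0
    · rw [hpol]
      ext x
      constructor
      · intro _
        have hx0 : x = 0 := funext fun i => i.elim0
        rw [hx0]
        exact subset_convexHull ℝ _ (by simp)
      · intro _; trivial
    · rw [hpol]; simp
    · intro u c hsup
      exact absurd (funext fun i => i.elim0 : u = 0) hsup.1
  by_cases hone : n = 1
  · subst hone
    exact (PolarAux.reflexive_one_false P hP).elim
  have hn : 2 ≤ n := by omega
  have hn1 : 1 ≤ n := by omega
  obtain ⟨⟨S, hSint, hPdef⟩, hint0, hsupp⟩ := hP
  subst hPdef
  have hSne : S.Nonempty :=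
    Finset.coe_nonempty.mp (convexHull_nonempty_iff.mp ⟨0, interior_subset hint0⟩)
  set E := (polarSet (convexHull ℝ (S : Set (Fin n → ℝ)))).extremePoints ℝ with hE
  have hEfin := PolarAux.extreme_finite S hSne
  have hKM := closure_convexHull_extremePoints
    (PolarAux.polar_compact _ hint0) (PolarAux.polar_convex _)
  have hclosed : IsClosed (convexHull ℝ E) := (hEfin.isCompact_convexHull ℝ).isClosed
  have hpolar_eq : polarSet (convexHull ℝ (S : Set (Fin n → ℝ))) = convexHull ℝ E := by
    rw [← hKM, hclosed.closure_eq]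
  refine ⟨⟨hEfin.toFinset, ?_, ?_⟩, PolarAux.zero_mem_interior_polar S, ?_⟩
  · intro x hx
    exact PolarAux.extreme_lattice hn1 S hSne (fun u c h => hsupp u c h)
      (hEfin.mem_toFinset.mp hx)
  · rw [hEfin.coe_toFinset]; exact hpolar_eq
  · intro u c hsup
    exact PolarAux.polar_codim_support hn S hSint hint0 u c hsup.1 hsup.2.1 hsup.2.2
end

section
/- Let P be a reflexive polyhedron. The set −R := {−m : m ∈ M, ⟨v,m⟩ ≤ 1 for all vertices v of P°, with equality for exactly one vertex} is exactly the set of lattice points of P that lie in the relative interior of some codimension-one face of P. -/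
open Finset

section basic
variable {n : ℕ}

lemma pairR_eq_dot (x y : Fin n → ℝ) : pairR x y = dotProduct x y := rfl

lemma pairR_comm (x y : Fin n → ℝ) : pairR x y = pairR y x := by
  simp [pairR_eq_dot, dotProduct_comm]

lemma pairR_add_left (x y z : Fin n → ℝ) : pairR (x + y) z = pairR x z + pairR y z := by
  simp [pairR_eq_dot, add_dotProduct]

lemma pairR_add_right (x y z : Fin n → ℝ) : pairR x (y + z) = pairR x y + pairR x z := by
  simp [pairR_eq_dot, dotProduct_add]

lemma pairR_smul_left (c : ℝ) (x y : Fin n → ℝ) : pairR (c • x) y = c * pairR x y := by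
  simp [pairR_eq_dot, smul_dotProduct, smul_eq_mul]

lemma pairR_smul_right (c : ℝ) (x y : Fin n → ℝ) : pairR x (c • y) = c * pairR x y := by
  simp [pairR_eq_dot, dotProduct_smul, smul_eq_mul]

lemma pairR_sub_left (x y z : Fin n → ℝ) : pairR (x - y) z = pairR x z - pairR y z := by
  simp [pairR_eq_dot, sub_dotProduct]

lemma pairR_sub_right (x y z : Fin n → ℝ) : pairR x (y - z) = pairR x y - pairR x z := by
  simp [pairR_eq_dot, dotProduct_sub]

lemma pairR_neg_right (x y : Fin n → ℝ) : pairR x (-y) = - pairR x y := by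
  simp [pairR_eq_dot]

lemma pairR_self_eq_zero {x : Fin n → ℝ} (h : pairR x x = 0) : x = 0 := by
  rw [pairR_eq_dot, dotProduct_self_eq_zero] at h; exact h

lemma continuous_pairR_right (y : Fin n → ℝ) : Continuous fun v : Fin n → ℝ => pairR v y := by
  unfold pairR
  exact continuous_finset_sum _ fun i _ => (continuous_apply i).mul continuous_const

lemma abs_pairR_le (w d : Fin n → ℝ) : |pairR w d| ≤ (∑ i, |w i|) * ‖d‖ := by
  calc |pairR w d| ≤ ∑ i, |w i * d i| := Finset.abs_sum_le_sum_abs _ _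
    _ ≤ ∑ i, |w i| * ‖d‖ := by
        refine Finset.sum_le_sum fun i _ => ?_
        rw [abs_mul]
        exact mul_le_mul_of_nonneg_left (by rw [← Real.norm_eq_abs]; exact norm_le_pi_norm d i) (abs_nonneg _)
    _ = (∑ i, |w i|) * ‖d‖ := by rw [Finset.sum_mul]

end basic

section geom
variable {n : ℕ}

/-- The affine hyperplane `{y | pairR v y = -1}`. -/
noncomputable def hyper (v : Fin n → ℝ) : AffineSubspace ℝ (Fin n → ℝ) where
  carrier := {y | pairR v y = -1}
  smul_vsub_vadd_mem' c {p₁ p₂ p₃} h₁ h₂ h₃ := by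
    simp only [Set.mem_setOf_eq] at *
    have : c • (p₁ -ᵥ p₂) +ᵥ p₃ = c • (p₁ - p₂) + p₃ := rfl
    rw [this, pairR_add_right, pairR_smul_right, pairR_sub_right, h₁, h₂, h₃]
    ring

lemma mem_hyper_iff {v y : Fin n → ℝ} : y ∈ hyper v ↔ pairR v y = -1 := Iff.rfl

/-- The kernel of `pairR z ·` as a submodule. -/
def kerPair (z : Fin n → ℝ) : Submodule ℝ (Fin n → ℝ) where
  carrier := {t | pairR z t = 0}
  add_mem' := by intro a b ha hb; simp only [Set.mem_setOf_eq] at *; rw [pairR_add_right, ha, hb]; ring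
  zero_mem' := by simp only [Set.mem_setOf_eq]; simp [pairR]
  smul_mem' := by intro c a ha; simp only [Set.mem_setOf_eq] at *; rw [pairR_smul_right, ha]; ring

lemma pairR_eq_zero_of_span_top {z : Fin n → ℝ} {T : Set (Fin n → ℝ)}
    (hT : Submodule.span ℝ T = ⊤) (h : ∀ s ∈ T, pairR z s = 0) : z = 0 := by
  have hle : Submodule.span ℝ T ≤ kerPair z := Submodule.span_le.2 h
  rw [hT, top_le_iff] at hle
  have hz : pairR z z = 0 := (hle ▸ Submodule.mem_top : z ∈ kerPair z)
  exact pairR_self_eq_zero hz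

variable {P : Set (Fin n → ℝ)} {S : Finset (Fin n → ℝ)}

lemma polar_eq (hSP : P = convexHull ℝ (S : Set (Fin n → ℝ))) :
    polarSet P = {v | ∀ s ∈ S, -1 ≤ pairR v s} := by
  ext v
  constructor
  · intro hv s hs
    exact hv s (hSP ▸ subset_convexHull ℝ _ hs)
  · intro hv y hy
    rw [hSP] at hy
    have hconv : Convex ℝ {y : Fin n → ℝ | -1 ≤ pairR v y} := by
      intro a ha b hb ca cb hca hcb hcab
      simp only [Set.mem_setOf_eq] at *
      rw [pairR_add_right, pairR_smul_right, pairR_smul_right]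
      nlinarith
    exact convexHull_min (fun s hs => hv s hs) hconv hy

lemma polar_convex : Convex ℝ (polarSet P) := by
  intro a ha b hb ca cb hca hcb hcab
  intro y hy
  have h1 := ha y hy
  have h2 := hb y hy
  show -1 ≤ pairR (ca • a + cb • b) y
  rw [pairR_add_left, pairR_smul_left, pairR_smul_left]
  nlinarith

lemma polar_closed (hSP : P = convexHull ℝ (S : Set (Fin n → ℝ))) :
    IsClosed (polarSet P) := by
  rw [polar_eq hSP]
  have : {v : Fin n → ℝ | ∀ s ∈ S, -1 ≤ pairR v s} = ⋂ s ∈ S, {v | -1 ≤ pairR v s} := by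
    ext v; simp
  rw [this]
  exact isClosed_biInter fun s _ => isClosed_le continuous_const (continuous_pairR_right s)

lemma polar_bound (h0 : (0 : Fin n → ℝ) ∈ interior P) :
    ∃ B : ℝ, 0 ≤ B ∧ ∀ w ∈ polarSet P, ∑ i, |w i| ≤ B := by
  rw [mem_interior_iff_mem_nhds, Metric.mem_nhds_iff] at h0
  obtain ⟨ε, hε, hball⟩ := h0
  refine ⟨n * (2 / ε), by positivity, fun w hw => ?_⟩
  have key : ∀ i, |w i| ≤ 2 / ε := by
    intro i
    set c : ℝ := if 0 ≤ w i then -(ε/2) else ε/2 with hc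
    have habs : |c| = ε / 2 := by
      rw [hc]; split_ifs <;> simp [abs_of_nonneg, abs_of_nonpos, le_of_lt hε, hε.le] <;> positivity
    have hmem : Pi.single i c ∈ P := by
      apply hball
      rw [Metric.mem_ball, dist_zero_right]
      have h2 : ‖(Pi.single i c : Fin n → ℝ)‖ = ‖c‖ := Pi.norm_single (G := fun _ : Fin n => ℝ) c
      rw [h2, Real.norm_eq_abs, habs]
      linarith
    have hpair : pairR w (Pi.single i c) = w i * c := by
      unfold pairR
      rw [Finset.sum_eq_single i]
      · simp
      · intro j _ hji; simp [Pi.single_eq_of_ne hji]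
      · simp
    have h1 := hw _ hmem
    rw [hpair] at h1
    have : w i * c = -(ε/2 * |w i|) := by
      rw [hc]; split_ifs with h
      · rw [abs_of_nonneg h]; ring
      · rw [abs_of_neg (not_le.1 h)]; ring
    rw [this] at h1
    rw [le_div_iff₀ hε]
    nlinarith
  calc ∑ i, |w i| ≤ ∑ _i : Fin n, (2/ε) := Finset.sum_le_sum fun i _ => key i
    _ = n * (2/ε) := by simp [Finset.sum_const, mul_comm]

lemma polar_compact (hSP : P = convexHull ℝ (S : Set (Fin n → ℝ)))
    (h0 : (0 : Fin n → ℝ) ∈ interior P) : IsCompact (polarSet P) := by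
  obtain ⟨B, hB0, hB⟩ := polar_bound h0
  have hbdd : Bornology.IsBounded (polarSet P) := by
    apply Metric.isBounded_iff_subset_closedBall (0 : Fin n → ℝ) |>.2
    refine ⟨B, fun w hw => ?_⟩
    rw [Metric.mem_closedBall, dist_zero_right]
    apply pi_norm_le_iff_of_nonneg hB0 |>.2
    intro i
    calc ‖w i‖ = |w i| := Real.norm_eq_abs _
      _ ≤ ∑ j, |w j| := Finset.single_le_sum (f := fun j => |w j|) (fun j _ => abs_nonneg _) (Finset.mem_univ i)
      _ ≤ B := hB w hw
  exact Metric.isCompact_of_isClosed_isBounded (polar_closed hSP) hbdd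

end geom

section extreme
variable {n : ℕ} {P : Set (Fin n → ℝ)} {S : Finset (Fin n → ℝ)}

lemma exists_pos_min {α : Type*} (S : Finset α) (f : α → ℝ) (h : ∀ s ∈ S, 0 < f s) :
    ∃ ε > 0, ∀ s ∈ S, ε ≤ f s := by
  classical
  rcases S.eq_empty_or_nonempty with rfl | hS
  · exact ⟨1, one_pos, by simp⟩
  · exact ⟨S.inf' hS f, (Finset.lt_inf'_iff hS).2 h, fun s hs => Finset.inf'_le f hs⟩

lemma active_span_top (hSP : P = convexHull ℝ (S : Set (Fin n → ℝ))) {v : Fin n → ℝ}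
    (hv : v ∈ Set.extremePoints ℝ (polarSet P)) :
    Submodule.span ℝ {s : Fin n → ℝ | s ∈ S ∧ pairR v s = -1} = ⊤ := by
  classical
  set T : Set (Fin n → ℝ) := {s : Fin n → ℝ | s ∈ S ∧ pairR v s = -1} with hT
  by_contra hne
  obtain ⟨f, hf0, hfmap⟩ :=
    Submodule.exists_dual_map_eq_bot_of_lt_top (p := Submodule.span ℝ T)
      (lt_top_iff_ne_top.2 hne) inferInstance
  set d : Fin n → ℝ := fun i => f (Pi.single i 1) with hd
  have hfd : ∀ y, f y = pairR y d := by
    intro y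
    rw [LinearMap.pi_apply_eq_sum_univ f y]
    unfold pairR
    refine Finset.sum_congr rfl fun i _ => ?_
    rw [smul_eq_mul, hd]
    congr 2
    ext j
    simp [Pi.single_apply, eq_comm]
  have hdz : d ≠ 0 := by
    intro h0
    apply hf0
    refine LinearMap.ext fun y => ?_
    rw [hfd, h0]
    simp [pairR]
  have hker : ∀ s ∈ T, pairR d s = 0 := by
    intro s hs
    have : f s ∈ Submodule.map f (Submodule.span ℝ T) :=
      Submodule.mem_map_of_mem (Submodule.subset_span hs)
    rw [hfmap, Submodule.mem_bot] at this
    rw [hfd] at this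
    rw [pairR_comm]
    exact this
  have hvQ : v ∈ polarSet P := hv.1
  have hvS : ∀ s ∈ S, -1 ≤ pairR v s := by
    rw [polar_eq hSP] at hvQ; exact hvQ
  obtain ⟨ε, hε, hεle⟩ := exists_pos_min S
      (fun s => if pairR d s = 0 then 1 else (pairR v s + 1) / |pairR d s|) (by
    intro s hs
    split_ifs with h
    · exact one_pos
    · have hsT : s ∉ T := fun hsT => h (hker s hsT)
      have hne1 : pairR v s ≠ -1 := fun he => hsT ⟨hs, he⟩
      have h1 : 0 < pairR v s + 1 := by
        rcases lt_or_eq_of_le (hvS s hs) with h2 | h2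
        · linarith
        · exact absurd h2.symm hne1
      positivity)
  have hkey : ∀ s ∈ S, ε * |pairR d s| ≤ pairR v s + 1 := by
    intro s hs
    have hh := hεle s hs
    split_ifs at hh with h
    · rw [h]; simp; linarith [hvS s hs]
    · have habs : 0 < |pairR d s| := abs_pos.2 h
      calc ε * |pairR d s| ≤ ((pairR v s + 1) / |pairR d s|) * |pairR d s| := by
            exact mul_le_mul_of_nonneg_right hh habs.le
        _ = pairR v s + 1 := div_mul_cancel₀ _ habs.ne'
  have hmem : ∀ c : ℝ, |c| ≤ ε → v + c • d ∈ polarSet P := by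
    intro c hc
    rw [polar_eq hSP]
    intro s hs
    rw [pairR_add_left, pairR_smul_left]
    have h1 : |c * pairR d s| ≤ ε * |pairR d s| := by
      rw [abs_mul]
      exact mul_le_mul_of_nonneg_right hc (abs_nonneg _)
    have h2 := hkey s hs
    have h3 : -(pairR v s + 1) ≤ c * pairR d s := by
      have := neg_abs_le (c * pairR d s); linarith
    linarith
  have hop : v ∈ openSegment ℝ (v + ε • d) (v + (-ε) • d) := by
    refine ⟨1/2, 1/2, by norm_num, by norm_num, by norm_num, ?_⟩
    module
  have := (hv.2 (hmem ε (by rw [abs_of_pos hε]))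
    (hmem (-ε) (by rw [abs_neg, abs_of_pos hε])) hop)
  have hd0 : ε • d = 0 := by
    have h9 : v + ε • d - v = 0 := by rw [this]; abel
    simpa using h9
  rcases smul_eq_zero.1 hd0 with h | h
  · exact absurd h hε.ne'
  · exact hdz h

lemma extremePoints_finite (hSP : P = convexHull ℝ (S : Set (Fin n → ℝ))) :
    (Set.extremePoints ℝ (polarSet P)).Finite := by
  classical
  set φ : (Fin n → ℝ) → Set (Fin n → ℝ) := fun v => {s : Fin n → ℝ | s ∈ S ∧ pairR v s = -1}
  have hinj : Set.InjOn φ (Set.extremePoints ℝ (polarSet P)) := by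
    intro v₁ h₁ v₂ h₂ heq
    have hsp := active_span_top hSP h₁
    have : v₁ - v₂ = 0 := by
      apply pairR_eq_zero_of_span_top hsp
      intro s hs
      have hs2 : s ∈ φ v₂ := heq ▸ hs
      rw [pairR_comm, pairR_sub_right, pairR_comm s v₁, pairR_comm s v₂, hs.2, hs2.2]
      ring
    exact sub_eq_zero.1 this
  have himg : (φ '' Set.extremePoints ℝ (polarSet P)).Finite := by
    apply Set.Finite.subset (Set.Finite.finite_subsets S.finite_toSet)
    rintro _ ⟨v, _, rfl⟩
    exact fun s hs => hs.1
  exact Set.Finite.of_finite_image himg hinj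

end extreme

section bipolar
variable {n : ℕ} {P : Set (Fin n → ℝ)} {S : Finset (Fin n → ℝ)}

lemma le_of_extreme (hSP : P = convexHull ℝ (S : Set (Fin n → ℝ)))
    (h0 : (0 : Fin n → ℝ) ∈ interior P) {x : Fin n → ℝ}
    (h : ∀ w ∈ Set.extremePoints ℝ (polarSet P), -1 ≤ pairR w x) :
    ∀ v ∈ polarSet P, -1 ≤ pairR v x := by
  have hKM := closure_convexHull_extremePoints (polar_compact hSP h0) polar_convex
  intro v hv
  have hA : IsClosed {w : Fin n → ℝ | -1 ≤ pairR w x} :=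
    isClosed_le continuous_const (continuous_pairR_right x)
  have hAconv : Convex ℝ {w : Fin n → ℝ | -1 ≤ pairR w x} := by
    intro a ha b hb ca cb hca hcb hcab
    simp only [Set.mem_setOf_eq] at *
    rw [pairR_add_left, pairR_smul_left, pairR_smul_left]
    nlinarith
  have : polarSet P ⊆ {w : Fin n → ℝ | -1 ≤ pairR w x} := by
    rw [← hKM]
    exact closure_minimal (convexHull_min h hAconv) hA
  exact this hv

lemma mem_P_iff (hSP : P = convexHull ℝ (S : Set (Fin n → ℝ)))
    (h0 : (0 : Fin n → ℝ) ∈ interior P) {x : Fin n → ℝ} :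
    x ∈ P ↔ ∀ w ∈ Set.extremePoints ℝ (polarSet P), -1 ≤ pairR w x := by
  constructor
  · intro hx w hw
    exact (extremePoints_subset hw) x hx
  · intro h
    by_contra hx
    have hPc : Convex ℝ P := hSP ▸ convex_convexHull ℝ _
    have hPcl : IsClosed P := hSP ▸ (S.finite_toSet.isCompact_convexHull ℝ).isClosed
    obtain ⟨f, u, hfP, hfx⟩ := geometric_hahn_banach_closed_point hPc hPcl hx
    have hu : 0 < u := by
      have := hfP 0 (interior_subset h0)
      simpa using this
    set d : Fin n → ℝ := fun i => f (Pi.single i 1) with hd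
    have hfd : ∀ y, f y = pairR y d := by
      intro y
      rw [← ContinuousLinearMap.coe_coe f, LinearMap.pi_apply_eq_sum_univ (f : (Fin n → ℝ) →ₗ[ℝ] ℝ) y]
      unfold pairR
      refine Finset.sum_congr rfl fun i _ => ?_
      have hs1 : (fun j => if i = j then (1:ℝ) else 0) = Pi.single i 1 := by
        ext j; simp [Pi.single_apply, eq_comm]
      rw [smul_eq_mul, hs1]
      rfl
    set v : Fin n → ℝ := (-u⁻¹) • d with hv
    have hvQ : v ∈ polarSet P := by
      intro y hy
      have h1 : f y < u := hfP y hy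
      rw [hv, pairR_smul_left, pairR_comm d y, ← hfd]
      have : -(u⁻¹ * f y) ≥ -(u⁻¹ * u) := by
        have := mul_lt_mul_of_pos_left h1 (inv_pos.2 hu)
        linarith
      rw [inv_mul_cancel₀ hu.ne'] at this
      linarith [this]
    have h2 : -1 ≤ pairR v x := le_of_extreme hSP h0 h v hvQ
    rw [hv, pairR_smul_left, pairR_comm d x, ← hfd] at h2
    have h3 : u < f x := hfx
    have : -(u⁻¹ * f x) < -(u⁻¹ * u) := by
      have := mul_lt_mul_of_pos_left h3 (inv_pos.2 hu)
      linarith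
    rw [inv_mul_cancel₀ hu.ne'] at this
    have : -u⁻¹ * f x < -1 := by linarith
    linarith

end bipolar

section intrinsic
variable {n : ℕ}

lemma mem_intrinsicInterior_iff' {s : Set (Fin n → ℝ)} {x : Fin n → ℝ} :
    x ∈ intrinsicInterior ℝ s ↔
      x ∈ affineSpan ℝ s ∧ ∃ ε > 0, ∀ y ∈ affineSpan ℝ s, dist y x < ε → y ∈ s := by
  rw [mem_intrinsicInterior]
  constructor
  · rintro ⟨y, hy, rfl⟩
    refine ⟨y.2, ?_⟩
    rw [mem_interior_iff_mem_nhds, Metric.mem_nhds_iff] at hy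
    obtain ⟨ε, hε, hball⟩ := hy
    refine ⟨ε, hε, fun z hz hdist => ?_⟩
    have : (⟨z, hz⟩ : affineSpan ℝ s) ∈ Metric.ball y ε := by
      rw [Metric.mem_ball, Subtype.dist_eq]
      exact hdist
    exact hball this
  · rintro ⟨hx, ε, hε, h⟩
    refine ⟨⟨x, hx⟩, ?_, rfl⟩
    rw [mem_interior_iff_mem_nhds, Metric.mem_nhds_iff]
    refine ⟨ε, hε, fun z hz => ?_⟩
    rw [Metric.mem_ball, Subtype.dist_eq] at hz
    exact h z.1 z.2 hz

end intrinsic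

section relint
variable {n : ℕ} {P : Set (Fin n → ℝ)} {S : Finset (Fin n → ℝ)}

lemma mem_relint_facet (hSP : P = convexHull ℝ (S : Set (Fin n → ℝ)))
    (h0 : (0 : Fin n → ℝ) ∈ interior P) {v x : Fin n → ℝ}
    (hxP : x ∈ P) (hvx : pairR v x = -1)
    (hstrict : ∀ w ∈ Set.extremePoints ℝ (polarSet P), w ≠ v → -1 < pairR w x) :
    x ∈ intrinsicInterior ℝ {y ∈ P | pairR v y = -1} := by
  classical
  set F : Set (Fin n → ℝ) := {y ∈ P | pairR v y = -1} with hF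
  have hxF : x ∈ F := ⟨hxP, hvx⟩
  have hspan : affineSpan ℝ F ≤ hyper v := affineSpan_le.2 (fun y hy => hy.2)
  have hfin := extremePoints_finite hSP
  obtain ⟨δ, hδ, hδle⟩ : ∃ δ > 0, ∀ w ∈ Set.extremePoints ℝ (polarSet P), w ≠ v →
      -1 + δ ≤ pairR w x := by
    obtain ⟨δ, hδ, hle⟩ := exists_pos_min (hfin.toFinset.erase v) (fun w => pairR w x + 1) (by
      intro w hw
      rw [Finset.mem_erase, Set.Finite.mem_toFinset] at hw
      have := hstrict w hw.2 hw.1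
      show 0 < pairR w x + 1
      linarith)
    refine ⟨δ, hδ, fun w hw hne => ?_⟩
    have := hle w (Finset.mem_erase.2 ⟨hne, hfin.mem_toFinset.2 hw⟩)
    linarith
  obtain ⟨B, hB0, hB⟩ := polar_bound h0
  refine mem_intrinsicInterior_iff'.2 ⟨subset_affineSpan ℝ F hxF, δ / (B + 1), by positivity, ?_⟩
  intro y hy hdist
  have hyH : pairR v y = -1 := hspan hy
  refine ⟨?_, hyH⟩
  rw [mem_P_iff hSP h0]
  intro w hw
  rcases eq_or_ne w v with rfl | hne
  · rw [hyH]
  · have h1 := hδle w hw hne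
    have h2 : |pairR w (y - x)| ≤ (∑ i, |w i|) * ‖y - x‖ := abs_pairR_le w (y - x)
    have h3 : (∑ i, |w i|) ≤ B := hB w (extremePoints_subset hw)
    have h4 : ‖y - x‖ = dist y x := (dist_eq_norm y x).symm
    have h5 : |pairR w (y - x)| ≤ (B + 1) * dist y x := by
      calc |pairR w (y - x)| ≤ (∑ i, |w i|) * ‖y - x‖ := h2
        _ ≤ (B + 1) * dist y x := by
            rw [h4] at *
            apply mul_le_mul (by linarith) le_rfl dist_nonneg (by linarith)
    have h6 : (B + 1) * dist y x < δ := by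
      have hB1 : (0:ℝ) < B + 1 := by linarith
      calc (B + 1) * dist y x < (B + 1) * (δ / (B + 1)) := by
            exact mul_lt_mul_of_pos_left hdist hB1
        _ = δ := by field_simp
    have h7 : pairR w y = pairR w x + pairR w (y - x) := by
      rw [← pairR_add_right]
      congr 1
      abel
    have h8 := neg_abs_le (pairR w (y - x))
    linarith

lemma eq_of_relint (hSP : P = convexHull ℝ (S : Set (Fin n → ℝ))) {v x w : Fin n → ℝ}
    (hvext : v ∈ Set.extremePoints ℝ (polarSet P))
    (hx : x ∈ intrinsicInterior ℝ {y ∈ P | pairR v y = -1})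
    (hwQ : w ∈ polarSet P) (hwx : pairR w x = -1) : w = v := by
  set F : Set (Fin n → ℝ) := {y ∈ P | pairR v y = -1} with hF
  obtain ⟨hxA, ε, hε, hball⟩ := mem_intrinsicInterior_iff'.1 hx
  have hxF : x ∈ F := intrinsicInterior_subset hx
  have hwF : ∀ z ∈ F, pairR w z = -1 := by
    intro z hz
    rcases eq_or_ne x z with rfl | hxz
    · exact hwx
    · have hnorm : 0 < ‖x - z‖ := by rwa [norm_pos_iff, sub_ne_zero]
      set t : ℝ := ε / (2 * ‖x - z‖) with ht
      have htpos : 0 < t := by positivity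
      set y : Fin n → ℝ := t • (x - z) + x with hy
      have hyA : y ∈ affineSpan ℝ F := by
        have := AffineSubspace.smul_vsub_vadd_mem (affineSpan ℝ F) t
          (subset_affineSpan ℝ F hxF) (subset_affineSpan ℝ F hz)
          (subset_affineSpan ℝ F hxF)
        simpa [vsub_eq_sub, vadd_eq_add, hy] using this
      have hdist : dist y x < ε := by
        rw [dist_eq_norm]
        have he : y - x = t • (x - z) := by rw [hy]; abel
        rw [he, norm_smul, Real.norm_eq_abs, abs_of_pos htpos, ht]
        rw [div_mul_eq_mul_div, mul_comm]
        rw [div_lt_iff₀ (by positivity)]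
        nlinarith
      have hyF : y ∈ F := hball y hyA hdist
      have hyP : -1 ≤ pairR w y := hwQ y hyF.1
      have hcalc : pairR w y = t * (-1 - pairR w z) + -1 := by
        rw [hy, pairR_add_right, pairR_smul_right, pairR_sub_right, hwx]
      have hz1 : -1 ≤ pairR w z := hwQ z hz.1
      nlinarith
  have hsp := active_span_top hSP hvext
  have hwv : w - v = 0 := by
    apply pairR_eq_zero_of_span_top hsp
    intro s hs
    have hsF : s ∈ F := ⟨hSP ▸ subset_convexHull ℝ (S : Set (Fin n → ℝ)) hs.1, hs.2⟩
    rw [pairR_sub_left, hwF s hsF, hs.2]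
    ring
  exact sub_eq_zero.1 hwv

end relint

/-- For a reflexive polytope `P`, the set `-R` of negatives of roots,
i.e. lattice points `m` with `⟨v,m⟩ ≤ 1` for all vertices `v` of `P°` with equality for
exactly one vertex, is exactly the set of lattice points of `P` lying in the relative
interior of some codimension-one face `F_v = {y ∈ P | ⟨v,y⟩ = -1}` of `P`. -/
theorem neg_roots_eq_facet_interior_points {n : ℕ} (P : Set (Fin n → ℝ))
    (hP : IsReflexive P) :
    {x : Fin n → ℝ | ∃ m : Fin n → ℤ, x = (fun i => -(m i : ℝ)) ∧
      (∀ v ∈ Set.extremePoints ℝ (polarSet P), pairR v (fun i => (m i : ℝ)) ≤ 1) ∧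
      (∃! v, v ∈ Set.extremePoints ℝ (polarSet P) ∧ pairR v (fun i => (m i : ℝ)) = 1)}
    = {x : Fin n → ℝ | IsIntegralPt x ∧ ∃ v ∈ Set.extremePoints ℝ (polarSet P),
        x ∈ intrinsicInterior ℝ {y ∈ P | pairR v y = -1}} := by
  obtain ⟨⟨S, hSint, hSP⟩, h0, -⟩ := hP
  ext x
  simp only [Set.mem_setOf_eq]
  constructor
  · rintro ⟨m, rfl, hle, v₀, ⟨hv₀ext, hv₀eq⟩, huniq⟩
    set mR : Fin n → ℝ := fun i => (m i : ℝ) with hmR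
    have hxneg : (fun i => -(m i : ℝ)) = -mR := by funext i; simp [hmR]
    have hpair : ∀ w : Fin n → ℝ, pairR w (fun i => -(m i : ℝ)) = -pairR w mR := by
      intro w; rw [hxneg, pairR_neg_right]
    have hstrict : ∀ w ∈ Set.extremePoints ℝ (polarSet P), w ≠ v₀ →
        -1 < pairR w (fun i => -(m i : ℝ)) := by
      intro w hw hne
      rw [hpair]
      have h1 : pairR w mR ≤ 1 := hle w hw
      have h2 : pairR w mR ≠ 1 := fun he => hne (huniq w ⟨hw, he⟩)
      have := lt_of_le_of_ne h1 h2
      linarith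
    have hxP : (fun i => -(m i : ℝ)) ∈ P := by
      rw [mem_P_iff hSP h0]
      intro w hw
      rcases eq_or_ne w v₀ with rfl | hne
      · rw [hpair, hv₀eq]
      · exact (hstrict w hw hne).le
    refine ⟨fun i => ⟨-(m i), by push_cast; ring⟩, v₀, hv₀ext, ?_⟩
    apply mem_relint_facet hSP h0 hxP ?_ hstrict
    rw [hpair, hv₀eq]
  · rintro ⟨hint, v, hvext, hxi⟩
    obtain ⟨hxP, hvx⟩ := intrinsicInterior_subset hxi
    choose z hz using hint
    have hmRx : (fun i => ((-z i : ℤ) : ℝ)) = -x := by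
      funext i; simp only [Pi.neg_apply]; rw [hz i]; push_cast; ring
    refine ⟨fun i => -(z i), ?_, ?_, v, ⟨hvext, ?_⟩, ?_⟩
    · funext i; rw [hz i]; push_cast; ring
    · intro w hw
      rw [hmRx, pairR_neg_right]
      have := (extremePoints_subset hw) x hxP
      linarith
    · rw [hmRx, pairR_neg_right, hvx]; norm_num
    · rintro w ⟨hw, heq⟩
      rw [hmRx, pairR_neg_right] at heq
      have hwx : pairR w x = -1 := by linarith
      exact eq_of_relint hSP hvext hxi (extremePoints_subset hw) hwx
end
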